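/- Let β be a nonzero vector of V. Then β is the point of minimal norm of the convex hull of {e_i − e_j : (i,j) ∈ S} for some nonempty set S of ordered pairs (i,j) with 1 ≤ i, j ≤ M if and only if there exists an admissible chain-partition datum for e_1,…,e_M such that β/‖β‖² = β̂, i.e. β/‖β‖² = Σ_{h=1}^{L} Σ_{m=l_1(h)}^{l_2(h)} Σ_{j ∈ Δ_{h,m}} (ε(h) − m) e_j/‖e_j‖². -/

import Mathlib

open scoped RealInnerProductSpace BigOperators

/-- A chain-partition datum for the pairwise orthogonal nonzero vectors `e 0, …, e (M-1)`:
a positive integer `L`, functions `l1 l2 : {1,…,L} → ℤ` with `l1 h ≤ l2 h`, and pairwise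
disjoint nonempty subsets `Δ h m ⊆ {1,…,M}` for `(h,m)` in the index set
`J = {(h,m) : 1 ≤ h ≤ L, l1 h ≤ m ≤ l2 h}` whose union is `{1,…,M}`. -/
structure ChainPartitionDatum (M : ℕ) (V : Type*) [NormedAddCommGroup V]
    [InnerProductSpace ℝ V] (e : Fin M → V) where
  L : ℕ
  Lpos : 0 < L
  l1 : Fin L → ℤ
  l2 : Fin L → ℤ
  l1_le_l2 : ∀ h, l1 h ≤ l2 h
  Δ : Fin L → ℤ → Finset (Fin M)
  Δ_nonempty : ∀ h m, l1 h ≤ m → m ≤ l2 h → (Δ h m).Nonempty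
  Δ_disjoint : ∀ h m h' m', l1 h ≤ m → m ≤ l2 h → l1 h' ≤ m' → m' ≤ l2 h' →
    (h, m) ≠ (h', m') → Disjoint (Δ h m) (Δ h' m')
  Δ_union : ∀ i : Fin M, ∃ h m, l1 h ≤ m ∧ m ≤ l2 h ∧ i ∈ Δ h m

namespace ChainPartitionDatum

variable {V : Type*} [NormedAddCommGroup V] [InnerProductSpace ℝ V]
variable {M : ℕ} {e : Fin M → V}

/-- `r h m = Σ_{j ∈ Δ_{h,m}} ‖e_j‖⁻²`. -/
noncomputable def r (D : ChainPartitionDatum M V e) (h : Fin D.L) (m : ℤ) : ℝ :=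
  ∑ j ∈ D.Δ h m, (‖e j‖ ^ 2)⁻¹

/-- `ε h = (Σ_{m=l1 h}^{l2 h} m·r_{h,m}) / (Σ_{m=l1 h}^{l2 h} r_{h,m})`. -/
noncomputable def eps (D : ChainPartitionDatum M V e) (h : Fin D.L) : ℝ :=
  (∑ m ∈ Finset.Icc (D.l1 h) (D.l2 h), (m : ℝ) * D.r h m) /
    ∑ m ∈ Finset.Icc (D.l1 h) (D.l2 h), D.r h m

/-- Admissibility: `−1/2 ≤ ε(h) < 1/2` for all `h` and `ε(1) > ε(2) > … > ε(L)`. -/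
def Admissible (D : ChainPartitionDatum M V e) : Prop :=
  (∀ h, -(1 / 2 : ℝ) ≤ D.eps h ∧ D.eps h < 1 / 2) ∧ StrictAnti D.eps

/-- `β̂ = Σ_{h=1}^{L} Σ_{m=l1 h}^{l2 h} Σ_{j ∈ Δ_{h,m}} (ε(h) − m)·e_j/‖e_j‖²`. -/
noncomputable def betaHat (D : ChainPartitionDatum M V e) : V :=
  ∑ h : Fin D.L, ∑ m ∈ Finset.Icc (D.l1 h) (D.l2 h), ∑ j ∈ D.Δ h m,
    ((D.eps h - (m : ℝ)) / ‖e j‖ ^ 2) • e j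

end ChainPartitionDatum

section Aux
variable {V : Type*} [NormedAddCommGroup V] [InnerProductSpace ℝ V]
variable {M : ℕ} {e : Fin M → V}

lemma inner_e_e (horth : ∀ i j : Fin M, i ≠ j → ⟪e i, e j⟫ = 0) (j k : Fin M) :
    ⟪e j, e k⟫ = if j = k then ‖e k‖^2 else 0 := by
  split_ifs with h
  · subst h; exact real_inner_self_eq_norm_sq _
  · exact horth _ _ h

lemma inner_sum_smul_e (horth : ∀ i j : Fin M, i ≠ j → ⟪e i, e j⟫ = 0)
    (s : Finset (Fin M)) (c : Fin M → ℝ) (k : Fin M) :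
    ⟪∑ j ∈ s, c j • e j, e k⟫ = if k ∈ s then c k * ‖e k‖^2 else 0 := by
  rw [sum_inner]
  simp only [real_inner_smul_left, inner_e_e horth, mul_ite, mul_zero]
  exact Finset.sum_ite_eq' s k (fun j => c j * ‖e k‖^2)

lemma span_ext {v w : V} (hv : v ∈ Submodule.span ℝ (Set.range e))
    (hw : w ∈ Submodule.span ℝ (Set.range e))
    (h : ∀ k, ⟪v, e k⟫ = ⟪w, e k⟫) : v = w := by
  rw [← sub_eq_zero]
  have hu : v - w ∈ Submodule.span ℝ (Set.range e) := Submodule.sub_mem _ hv hw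
  have key : ∀ y ∈ Submodule.span ℝ (Set.range e), ⟪v - w, y⟫ = 0 := by
    intro y hy
    induction hy using Submodule.span_induction with
    | mem y hy => obtain ⟨k, rfl⟩ := hy; rw [inner_sub_left, h k, sub_self]
    | zero => exact inner_zero_right _
    | add y z _ _ hy hz => rw [inner_add_right, hy, hz, add_zero]
    | smul a y _ hy => rw [real_inner_smul_right, hy, mul_zero]
  have := key _ hu
  rwa [inner_self_eq_zero] at this

end Aux
namespace ChainPartitionDatum

variable {V : Type*} [NormedAddCommGroup V] [InnerProductSpace ℝ V]
variable {M : ℕ} {e : Fin M → V} (D : ChainPartitionDatum M V e)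

/-- The index set `J` as a finset of a sigma type. -/
noncomputable def classes : Finset ((_ : Fin D.L) × ℤ) :=
  Finset.univ.sigma fun h => Finset.Icc (D.l1 h) (D.l2 h)

lemma mem_classes {p : (_ : Fin D.L) × ℤ} :
    p ∈ D.classes ↔ D.l1 p.1 ≤ p.2 ∧ p.2 ≤ D.l2 p.1 := by
  cases p; simp [classes]

lemma class_unique {j : Fin M} {h h' : Fin D.L} {m m' : ℤ}
    (h1 : D.l1 h ≤ m) (h2 : m ≤ D.l2 h) (h1' : D.l1 h' ≤ m') (h2' : m' ≤ D.l2 h')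
    (hj : j ∈ D.Δ h m) (hj' : j ∈ D.Δ h' m') : h = h' ∧ m = m' := by
  by_contra hc
  have hne : (h, m) ≠ (h', m') := by
    intro hq; exact hc ⟨congrArg Prod.fst hq, congrArg Prod.snd hq⟩
  exact (Finset.disjoint_left.1 (D.Δ_disjoint h m h' m' h1 h2 h1' h2' hne)) hj hj'

lemma pairwiseDisjoint :
    (↑D.classes : Set ((_ : Fin D.L) × ℤ)).PairwiseDisjoint (fun p => D.Δ p.1 p.2) := by
  intro p hp q hq hpq
  rw [Finset.mem_coe, D.mem_classes] at hp hq
  refine D.Δ_disjoint _ _ _ _ hp.1 hp.2 hq.1 hq.2 ?_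
  intro hc
  apply hpq
  cases p; cases q
  simp only [Prod.mk.injEq] at hc
  simp [hc.1, hc.2]

lemma biUnion_eq : D.classes.biUnion (fun p => D.Δ p.1 p.2) = Finset.univ := by
  refine Finset.eq_univ_iff_forall.2 fun j => ?_
  obtain ⟨h, m, h1, h2, hj⟩ := D.Δ_union j
  exact Finset.mem_biUnion.2 ⟨⟨h, m⟩, D.mem_classes.2 ⟨h1, h2⟩, hj⟩

lemma sum_partition {α : Type*} [AddCommMonoid α] (g : Fin M → α) :
    ∑ p ∈ D.classes, ∑ j ∈ D.Δ p.1 p.2, g j = ∑ j, g j := by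
  rw [← Finset.sum_biUnion D.pairwiseDisjoint, D.biUnion_eq]

noncomputable def hsel (j : Fin M) : Fin D.L := (D.Δ_union j).choose

noncomputable def msel (j : Fin M) : ℤ := (D.Δ_union j).choose_spec.choose

lemma sel_spec (j : Fin M) : D.l1 (D.hsel j) ≤ D.msel j ∧ D.msel j ≤ D.l2 (D.hsel j) ∧
    j ∈ D.Δ (D.hsel j) (D.msel j) := (D.Δ_union j).choose_spec.choose_spec

/-- the coefficient `x j = ε(h) − m` for `j ∈ Δ h m`. -/
noncomputable def x (j : Fin M) : ℝ := D.eps (D.hsel j) - (D.msel j : ℝ)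

lemma x_eq {j : Fin M} {h : Fin D.L} {m : ℤ} (h1 : D.l1 h ≤ m) (h2 : m ≤ D.l2 h)
    (hj : j ∈ D.Δ h m) : D.x j = D.eps h - (m : ℝ) := by
  obtain ⟨s1, s2, s3⟩ := D.sel_spec j
  obtain ⟨rfl, rfl⟩ := D.class_unique s1 s2 h1 h2 s3 hj
  rfl

lemma r_nonneg (h : Fin D.L) (m : ℤ) : 0 ≤ D.r h m :=
  Finset.sum_nonneg fun j _ => inv_nonneg.2 (by positivity)

lemma r_pos (he : ∀ i, e i ≠ 0) {h : Fin D.L} {m : ℤ} (h1 : D.l1 h ≤ m) (h2 : m ≤ D.l2 h) :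
    0 < D.r h m := by
  refine Finset.sum_pos (fun j _ => ?_) (D.Δ_nonempty h m h1 h2)
  have : 0 < ‖e j‖ := norm_pos_iff.2 (he j)
  positivity

lemma sum_r_pos (he : ∀ i, e i ≠ 0) (h : Fin D.L) :
    0 < ∑ m ∈ Finset.Icc (D.l1 h) (D.l2 h), D.r h m := by
  refine Finset.sum_pos (fun m hm => ?_) ?_
  · rw [Finset.mem_Icc] at hm; exact D.r_pos he hm.1 hm.2
  · exact ⟨D.l1 h, Finset.mem_Icc.2 ⟨le_refl _, D.l1_le_l2 h⟩⟩

lemma mean_zero (he : ∀ i, e i ≠ 0) (h : Fin D.L) :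
    ∑ m ∈ Finset.Icc (D.l1 h) (D.l2 h), (D.eps h - (m : ℝ)) * D.r h m = 0 := by
  have hB : (∑ m ∈ Finset.Icc (D.l1 h) (D.l2 h), D.r h m) ≠ 0 := (D.sum_r_pos he h).ne'
  simp only [sub_mul, Finset.sum_sub_distrib, ← Finset.mul_sum, eps]
  rw [div_mul_cancel₀ _ hB, sub_self]

lemma betaHat_eq : D.betaHat = ∑ j, (D.x j / ‖e j‖ ^ 2) • e j := by
  rw [betaHat, ← Finset.sum_sigma (Finset.univ) (fun h => Finset.Icc (D.l1 h) (D.l2 h))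
    (fun p => ∑ j ∈ D.Δ p.1 p.2, ((D.eps p.1 - (p.2 : ℝ)) / ‖e j‖ ^ 2) • e j)]
  rw [← D.sum_partition (fun j => (D.x j / ‖e j‖ ^ 2) • e j)]
  refine Finset.sum_congr rfl fun p hp => Finset.sum_congr rfl fun j hj => ?_
  rw [D.mem_classes] at hp
  rw [D.x_eq hp.1 hp.2 hj]

lemma betaHat_mem_span : D.betaHat ∈ Submodule.span ℝ (Set.range e) := by
  rw [betaHat_eq]
  exact Submodule.sum_mem _ fun j _ =>
    Submodule.smul_mem _ _ (Submodule.subset_span (Set.mem_range_self j))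

lemma inner_betaHat (he : ∀ i, e i ≠ 0)
    (horth : ∀ i j : Fin M, i ≠ j → ⟪e i, e j⟫ = 0) (k : Fin M) :
    ⟪D.betaHat, e k⟫ = D.x k := by
  rw [D.betaHat_eq, inner_sum_smul_e horth, if_pos (Finset.mem_univ k),
    div_mul_cancel₀]
  exact pow_ne_zero 2 (norm_ne_zero_iff.2 (he k))

lemma norm_betaHat_sq (he : ∀ i, e i ≠ 0)
    (horth : ∀ i j : Fin M, i ≠ j → ⟪e i, e j⟫ = 0) :
    ‖D.betaHat‖ ^ 2 = ∑ p ∈ D.classes, (D.eps p.1 - (p.2 : ℝ)) ^ 2 * D.r p.1 p.2 := by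
  have h1 : ‖D.betaHat‖ ^ 2 = ∑ j, (D.x j) ^ 2 * (‖e j‖ ^ 2)⁻¹ := by
    rw [← real_inner_self_eq_norm_sq]
    nth_rewrite 1 [D.betaHat_eq]
    rw [sum_inner]
    refine Finset.sum_congr rfl fun j _ => ?_
    rw [real_inner_smul_left, real_inner_comm, D.inner_betaHat he horth]
    ring
  rw [h1, ← D.sum_partition (fun j => (D.x j) ^ 2 * (‖e j‖ ^ 2)⁻¹)]
  refine Finset.sum_congr rfl fun p hp => ?_
  rw [D.mem_classes] at hp
  rw [r, Finset.mul_sum]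
  exact Finset.sum_congr rfl fun j hj => by rw [D.x_eq hp.1 hp.2 hj]

end ChainPartitionDatum
section IccHelp
variable {α : Type*} [AddCommMonoid α]

lemma Icc_succ_insert {a b : ℤ} (h : a ≤ b + 1) :
    Finset.Icc a (b + 1) = insert (b + 1) (Finset.Icc a b) := by
  ext x; simp only [Finset.mem_Icc, Finset.mem_insert]; omega

lemma sum_Icc_succ_top' {a b : ℤ} (h : a ≤ b + 1) (f : ℤ → α) :
    ∑ m ∈ Finset.Icc a (b + 1), f m = (∑ m ∈ Finset.Icc a b, f m) + f (b + 1) := by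
  rw [Icc_succ_insert h, Finset.sum_insert (by simp)]
  exact add_comm _ _

lemma Icc_bot_insert {a b : ℤ} (h : a ≤ b) :
    Finset.Icc a b = insert a (Finset.Icc (a + 1) b) := by
  ext x; simp only [Finset.mem_Icc, Finset.mem_insert]; omega

lemma sum_Icc_split (f : ℤ → α) {a b c : ℤ} (hab : a - 1 ≤ b) (hbc : b ≤ c) :
    ∑ m ∈ Finset.Icc a c, f m =
      (∑ m ∈ Finset.Icc a b, f m) + ∑ m ∈ Finset.Icc (b + 1) c, f m := by
  have hd : Disjoint (Finset.Icc a b) (Finset.Icc (b + 1) c) := by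
    rw [Finset.disjoint_left]
    intro x hx hx'
    simp only [Finset.mem_Icc] at hx hx'
    omega
  rw [← Finset.sum_union hd]
  congr 1
  ext x; simp only [Finset.mem_Icc, Finset.mem_union]; omega

end IccHelp

namespace ChainPartitionDatum

variable {V : Type*} [NormedAddCommGroup V] [InnerProductSpace ℝ V]
variable {M : ℕ} {e : Fin M → V} (D : ChainPartitionDatum M V e)

/-- partial sums along a chain -/
noncomputable def F (h : Fin D.L) (m : ℤ) : ℝ :=
  ∑ m' ∈ Finset.Icc (D.l1 h) m, (D.eps h - (m' : ℝ)) * D.r h m'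

lemma F_of_lt {h : Fin D.L} {m : ℤ} (hm : m < D.l1 h) : D.F h m = 0 := by
  rw [F, Finset.Icc_eq_empty (by omega), Finset.sum_empty]

lemma F_l2 (he : ∀ i, e i ≠ 0) (h : Fin D.L) : D.F h (D.l2 h) = 0 := D.mean_zero he h

lemma F_succ {h : Fin D.L} {m : ℤ} (hm : D.l1 h ≤ m) :
    D.F h m = D.F h (m - 1) + (D.eps h - (m : ℝ)) * D.r h m := by
  have : m = (m - 1) + 1 := by ring
  rw [F, this, sum_Icc_succ_top' (by omega), ← this]
  rfl

lemma F_nonneg (he : ∀ i, e i ≠ 0) {h : Fin D.L} {m : ℤ} (h1 : D.l1 h ≤ m)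
    (h2 : m ≤ D.l2 h) : 0 ≤ D.F h m := by
  rcases lt_or_ge (m : ℝ) (D.eps h) with hlt | hge
  · refine Finset.sum_nonneg fun m' hm' => ?_
    rw [Finset.mem_Icc] at hm'
    have : (m' : ℝ) ≤ (m : ℝ) := Int.cast_le.2 hm'.2
    have := D.r_nonneg h m'
    nlinarith
  · have hsplit := sum_Icc_split (fun m' => (D.eps h - (m' : ℝ)) * D.r h m')
      (a := D.l1 h) (b := m) (c := D.l2 h) (by omega) h2
    rw [D.mean_zero he h] at hsplit
    have h3 : ∑ m' ∈ Finset.Icc (m + 1) (D.l2 h), (D.eps h - (m' : ℝ)) * D.r h m' ≤ 0 := by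
      refine Finset.sum_nonpos fun m' hm' => ?_
      rw [Finset.mem_Icc] at hm'
      have : (m : ℝ) + 1 ≤ (m' : ℝ) := by exact_mod_cast hm'.1
      have := D.r_nonneg h m'
      nlinarith
    have : D.F h m = -∑ m' ∈ Finset.Icc (m + 1) (D.l2 h), (D.eps h - (m' : ℝ)) * D.r h m' := by
      rw [F]; linarith
    linarith

/-- Abel-type identity: the sum of the partial sums equals the weighted sum of squares. -/
lemma sum_F (he : ∀ i, e i ≠ 0) (h : Fin D.L) :
    ∑ m ∈ Finset.Icc (D.l1 h) (D.l2 h - 1), D.F h m =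
      ∑ m ∈ Finset.Icc (D.l1 h) (D.l2 h), (D.eps h - (m : ℝ)) ^ 2 * D.r h m := by
  set a := D.l1 h
  set c := D.l2 h
  have hac : a ≤ c := D.l1_le_l2 h
  have swap : ∑ m ∈ Finset.Icc a (c - 1), D.F h m =
      ∑ m' ∈ Finset.Icc a (c - 1), ∑ _m ∈ Finset.Icc m' (c - 1),
        (D.eps h - (m' : ℝ)) * D.r h m' := by
    simp only [F]
    exact Finset.sum_comm' (by intro x y; simp only [Finset.mem_Icc]; omega)
  rw [swap]
  have step3 : ∀ m' ∈ Finset.Icc a (c - 1),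
      (∑ _m ∈ Finset.Icc m' (c - 1), (D.eps h - (m' : ℝ)) * D.r h m') =
        ((c : ℝ) - (m' : ℝ)) * ((D.eps h - (m' : ℝ)) * D.r h m') := by
    intro m' hm'
    rw [Finset.mem_Icc] at hm'
    rw [Finset.sum_const, nsmul_eq_mul, Int.card_Icc]
    congr 1
    have h2 : ((c - 1 + 1 - m').toNat : ℤ) = c - m' := by omega
    exact_mod_cast h2
  rw [Finset.sum_congr rfl step3]
  have hext : ∑ m' ∈ Finset.Icc a c, ((c : ℝ) - (m' : ℝ)) * ((D.eps h - (m' : ℝ)) * D.r h m') =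
      ∑ m' ∈ Finset.Icc a (c - 1), ((c : ℝ) - (m' : ℝ)) * ((D.eps h - (m' : ℝ)) * D.r h m') := by
    have : c = (c - 1) + 1 := by ring
    rw [this, sum_Icc_succ_top' (by omega), ← this]
    simp
  rw [← hext]
  have expand : ∀ m' : ℤ, ((c : ℝ) - (m' : ℝ)) * ((D.eps h - (m' : ℝ)) * D.r h m') =
      ((c : ℝ) - D.eps h) * ((D.eps h - (m' : ℝ)) * D.r h m') +
        (D.eps h - (m' : ℝ)) ^ 2 * D.r h m' := by
    intro m'; ring
  rw [Finset.sum_congr rfl (fun m' _ => expand m'), Finset.sum_add_distrib, ← Finset.mul_sum,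
    D.mean_zero he h, mul_zero, zero_add]

end ChainPartitionDatum
namespace ChainPartitionDatum

variable {V : Type*} [NormedAddCommGroup V] [InnerProductSpace ℝ V]
variable {M : ℕ} {e : Fin M → V} (D : ChainPartitionDatum M V e)

/-- level vector -/
noncomputable def lvec (h : Fin D.L) (m : ℤ) : V :=
  ∑ i ∈ D.Δ h m, (‖e i‖ ^ 2)⁻¹ • e i

/-- edges between consecutive levels, with their endpoints -/
noncomputable def edges : Finset ((_ : Fin D.L) × (_ : ℤ) × Fin M × Fin M) :=
  Finset.univ.sigma fun h => (Finset.Icc (D.l1 h) (D.l2 h - 1)).sigma fun m =>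
    (D.Δ h m) ×ˢ (D.Δ h (m + 1))

/-- edge weights -/
noncomputable def wt (q : (_ : Fin D.L) × (_ : ℤ) × Fin M × Fin M) : ℝ :=
  (D.F q.1 q.2.1 * (D.r q.1 q.2.1)⁻¹ * (‖e q.2.2.1‖ ^ 2)⁻¹) *
    ((D.r q.1 (q.2.1 + 1))⁻¹ * (‖e q.2.2.2‖ ^ 2)⁻¹)

lemma mem_edges {q : (_ : Fin D.L) × (_ : ℤ) × Fin M × Fin M} :
    q ∈ D.edges ↔ D.l1 q.1 ≤ q.2.1 ∧ q.2.1 ≤ D.l2 q.1 - 1 ∧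
      q.2.2.1 ∈ D.Δ q.1 q.2.1 ∧ q.2.2.2 ∈ D.Δ q.1 (q.2.1 + 1) := by
  obtain ⟨h, m, i, j⟩ := q
  simp [edges, Finset.mem_sigma, Finset.mem_Icc, Finset.mem_product, and_assoc]

lemma wt_nonneg (he : ∀ i, e i ≠ 0) {q : (_ : Fin D.L) × (_ : ℤ) × Fin M × Fin M}
    (hq : q ∈ D.edges) : 0 ≤ D.wt q := by
  rw [D.mem_edges] at hq
  have hF := D.F_nonneg he hq.1 (by omega)
  have h1 := D.r_nonneg q.1 q.2.1
  have h2 := D.r_nonneg q.1 (q.2.1 + 1)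
  have h3 : (0:ℝ) ≤ (‖e q.2.2.1‖ ^ 2)⁻¹ := by positivity
  have h4 : (0:ℝ) ≤ (‖e q.2.2.2‖ ^ 2)⁻¹ := by positivity
  have h1' : (0:ℝ) ≤ (D.r q.1 q.2.1)⁻¹ := by positivity
  have h2' : (0:ℝ) ≤ (D.r q.1 (q.2.1 + 1))⁻¹ := by positivity
  rw [wt]; positivity

/-- sum of the weights on the edges of one level-pair -/
lemma edge_wt_sum (he : ∀ i, e i ≠ 0) {h : Fin D.L} {m : ℤ}
    (h1 : D.l1 h ≤ m) (h2 : m ≤ D.l2 h - 1) :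
    ∑ i ∈ D.Δ h m, ∑ j ∈ D.Δ h (m + 1),
      (D.F h m * (D.r h m)⁻¹ * (‖e i‖ ^ 2)⁻¹) * ((D.r h (m + 1))⁻¹ * (‖e j‖ ^ 2)⁻¹) =
      D.F h m := by
  have hr : D.r h m ≠ 0 := (D.r_pos he h1 (by omega)).ne'
  have hr' : D.r h (m + 1) ≠ 0 := (D.r_pos he (by omega) (by omega)).ne'
  have inner : ∀ i : Fin M, ∑ j ∈ D.Δ h (m + 1),
      (D.F h m * (D.r h m)⁻¹ * (‖e i‖ ^ 2)⁻¹) * ((D.r h (m + 1))⁻¹ * (‖e j‖ ^ 2)⁻¹) =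
      D.F h m * (D.r h m)⁻¹ * (‖e i‖ ^ 2)⁻¹ := by
    intro i
    rw [← Finset.mul_sum, ← Finset.mul_sum, ← r, inv_mul_cancel₀ hr', mul_one]
  rw [Finset.sum_congr rfl fun i _ => inner i, ← Finset.mul_sum, ← r, mul_assoc,
    inv_mul_cancel₀ hr, mul_one]

/-- the edge vectors of one level-pair sum to the flow difference -/
lemma edge_vec_sum (he : ∀ i, e i ≠ 0) {h : Fin D.L} {m : ℤ}
    (h1 : D.l1 h ≤ m) (h2 : m ≤ D.l2 h - 1) :
    ∑ i ∈ D.Δ h m, ∑ j ∈ D.Δ h (m + 1),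
      ((D.F h m * (D.r h m)⁻¹ * (‖e i‖ ^ 2)⁻¹) * ((D.r h (m + 1))⁻¹ * (‖e j‖ ^ 2)⁻¹)) • (e i - e j)
      = (D.F h m * (D.r h m)⁻¹) • D.lvec h m - (D.F h m * (D.r h (m + 1))⁻¹) • D.lvec h (m + 1) := by
  have hr : D.r h m ≠ 0 := (D.r_pos he h1 (by omega)).ne'
  have hr' : D.r h (m + 1) ≠ 0 := (D.r_pos he (by omega) (by omega)).ne'
  simp only [smul_sub, Finset.sum_sub_distrib]
  congr 1
  · -- first part
    have inner1 : ∀ i : Fin M, ∑ j ∈ D.Δ h (m + 1),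
        ((D.F h m * (D.r h m)⁻¹ * (‖e i‖ ^ 2)⁻¹) * ((D.r h (m + 1))⁻¹ * (‖e j‖ ^ 2)⁻¹)) • e i
        = (D.F h m * (D.r h m)⁻¹) • ((‖e i‖ ^ 2)⁻¹ • e i) := by
      intro i
      rw [← Finset.sum_smul, ← Finset.mul_sum, ← Finset.mul_sum, ← r,
        inv_mul_cancel₀ hr', mul_one, smul_smul]
    rw [Finset.sum_congr rfl fun i _ => inner1 i, ← Finset.smul_sum]
    rfl
  · -- second part
    rw [Finset.sum_comm]
    have inner2 : ∀ j : Fin M, ∑ i ∈ D.Δ h m,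
        ((D.F h m * (D.r h m)⁻¹ * (‖e i‖ ^ 2)⁻¹) * ((D.r h (m + 1))⁻¹ * (‖e j‖ ^ 2)⁻¹)) • e j
        = (D.F h m * (D.r h (m + 1))⁻¹) • ((‖e j‖ ^ 2)⁻¹ • e j) := by
      intro j
      rw [← Finset.sum_smul, smul_smul]
      congr 1
      rw [← Finset.sum_mul, ← Finset.mul_sum, ← r]
      field_simp
    rw [Finset.sum_congr rfl fun j _ => inner2 j, ← Finset.smul_sum]
    rfl

/-- telescoping along one chain -/
lemma chain_sum (he : ∀ i, e i ≠ 0) (h : Fin D.L) :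
    ∑ m ∈ Finset.Icc (D.l1 h) (D.l2 h - 1),
      ((D.F h m * (D.r h m)⁻¹) • D.lvec h m - (D.F h m * (D.r h (m + 1))⁻¹) • D.lvec h (m + 1))
      = ∑ m ∈ Finset.Icc (D.l1 h) (D.l2 h), (D.eps h - (m : ℝ)) • D.lvec h m := by
  set a := D.l1 h
  set c := D.l2 h
  have hac : a ≤ c := D.l1_le_l2 h
  rw [Finset.sum_sub_distrib]
  have hS1 : ∑ m ∈ Finset.Icc a (c - 1), (D.F h m * (D.r h m)⁻¹) • D.lvec h m =
      ∑ m ∈ Finset.Icc a c, (D.F h m * (D.r h m)⁻¹) • D.lvec h m := by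
    have hc : c = (c - 1) + 1 := by ring
    rw [hc, sum_Icc_succ_top' (by omega), ← hc, D.F_l2 he h, zero_mul, zero_smul, add_zero]
  have hS2 : ∑ m ∈ Finset.Icc a (c - 1), (D.F h m * (D.r h (m + 1))⁻¹) • D.lvec h (m + 1) =
      ∑ m ∈ Finset.Icc a c, (D.F h (m - 1) * (D.r h m)⁻¹) • D.lvec h m := by
    rw [Icc_bot_insert hac, Finset.sum_insert (by simp), D.F_of_lt (by omega), zero_mul,
      zero_smul, zero_add]
    refine Finset.sum_nbij' (fun m => m + 1) (fun m => m - 1) ?_ ?_ ?_ ?_ ?_ <;>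
      simp only [Finset.mem_Icc] <;> intros <;> first | omega | (congr 1; ring_nf)
  rw [hS1, hS2, ← Finset.sum_sub_distrib]
  refine Finset.sum_congr rfl fun m hm => ?_
  rw [Finset.mem_Icc] at hm
  have hr : D.r h m ≠ 0 := (D.r_pos he hm.1 hm.2).ne'
  rw [← sub_smul]
  congr 1
  rw [D.F_succ hm.1]
  field_simp
  ring

lemma sum_lvec (he : ∀ i, e i ≠ 0) :
    ∑ h : Fin D.L, ∑ m ∈ Finset.Icc (D.l1 h) (D.l2 h), (D.eps h - (m : ℝ)) • D.lvec h m
      = D.betaHat := by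
  rw [betaHat]
  refine Finset.sum_congr rfl fun h _ => Finset.sum_congr rfl fun m _ => ?_
  rw [lvec, Finset.smul_sum]
  refine Finset.sum_congr rfl fun j _ => ?_
  rw [smul_smul, div_eq_mul_inv]

lemma sum_wt (he : ∀ i, e i ≠ 0) (horth : ∀ i j : Fin M, i ≠ j → ⟪e i, e j⟫ = 0) :
    ∑ q ∈ D.edges, D.wt q = ‖D.betaHat‖ ^ 2 := by
  rw [edges, Finset.sum_sigma]
  rw [D.norm_betaHat_sq he horth, classes, Finset.sum_sigma]
  refine Finset.sum_congr rfl fun h _ => ?_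
  rw [Finset.sum_sigma]
  have : ∀ m ∈ Finset.Icc (D.l1 h) (D.l2 h - 1),
      ∑ p ∈ (D.Δ h m) ×ˢ (D.Δ h (m + 1)), D.wt ⟨h, m, p⟩ = D.F h m := by
    intro m hm
    rw [Finset.mem_Icc] at hm
    rw [Finset.sum_product]
    exact D.edge_wt_sum he hm.1 hm.2
  rw [Finset.sum_congr rfl this, D.sum_F he h]

lemma sum_wt_smul (he : ∀ i, e i ≠ 0) :
    ∑ q ∈ D.edges, D.wt q • (e q.2.2.1 - e q.2.2.2) = D.betaHat := by
  rw [edges, Finset.sum_sigma]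
  rw [← D.sum_lvec he]
  refine Finset.sum_congr rfl fun h _ => ?_
  rw [Finset.sum_sigma, ← D.chain_sum he h]
  refine Finset.sum_congr rfl fun m hm => ?_
  rw [Finset.mem_Icc] at hm
  rw [Finset.sum_product]
  exact D.edge_vec_sum he hm.1 hm.2

end ChainPartitionDatum
section Mpr
variable {V : Type*} [NormedAddCommGroup V] [InnerProductSpace ℝ V]
variable {M : ℕ} {e : Fin M → V}

theorem mpr_direction (he : ∀ i, e i ≠ 0)
    (horth : ∀ i j : Fin M, i ≠ j → ⟪e i, e j⟫ = 0)
    (D : ChainPartitionDatum M V e) (hadm : D.Admissible)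
    (β : V) (hβ : β ≠ 0) (hb : (‖β‖ ^ 2)⁻¹ • β = D.betaHat) :
    ∃ S : Set (Fin M × Fin M), S.Nonempty ∧
      β ∈ convexHull ℝ ((fun p : Fin M × Fin M => e p.1 - e p.2) '' S) ∧
      ∀ x ∈ convexHull ℝ ((fun p : Fin M × Fin M => e p.1 - e p.2) '' S), ‖β‖ ≤ ‖x‖ := by
  have hβn : ‖β‖ ≠ 0 := norm_ne_zero_iff.2 hβ
  have hβ2 : (‖β‖ : ℝ) ^ 2 ≠ 0 := pow_ne_zero _ hβn
  have hBH : D.betaHat ≠ 0 := hb ▸ smul_ne_zero (inv_ne_zero hβ2) hβ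
  have hnorm : ‖D.betaHat‖ = ‖β‖⁻¹ := by
    rw [← hb, norm_smul, Real.norm_eq_abs, abs_inv, abs_pow, abs_norm, pow_two, mul_inv,
      mul_assoc, inv_mul_cancel₀ hβn, mul_one]
  set S : Set (Fin M × Fin M) :=
    {p | ∃ h m, D.l1 h ≤ m ∧ m ≤ D.l2 h - 1 ∧ p.1 ∈ D.Δ h m ∧ p.2 ∈ D.Δ h (m + 1)} with hS
  have inner1 : ∀ p ∈ S, ⟪D.betaHat, e p.1 - e p.2⟫ = 1 := by
    rintro p ⟨h, m, h1, h2, hi, hj⟩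
    rw [inner_sub_right, D.inner_betaHat he horth, D.inner_betaHat he horth,
      D.x_eq h1 (by omega) hi, D.x_eq (by omega) (by omega) hj]
    push_cast; ring
  have hex : ∃ h : Fin D.L, D.l1 h < D.l2 h := by
    by_contra hno
    push_neg at hno
    apply hBH
    rw [ChainPartitionDatum.betaHat]
    refine Finset.sum_eq_zero fun h _ => ?_
    have heq : D.l2 h = D.l1 h := le_antisymm (hno h) (D.l1_le_l2 h)
    have hr : D.r h (D.l1 h) ≠ 0 := (D.r_pos he le_rfl (heq ▸ le_rfl)).ne'
    have heps : D.eps h = (D.l1 h : ℝ) := by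
      rw [ChainPartitionDatum.eps, heq, Finset.Icc_self, Finset.sum_singleton,
        Finset.sum_singleton, mul_div_assoc, div_self hr, mul_one]
    have hl0 : D.l1 h = 0 := by
      have hb1 := (hadm.1 h).1
      have hb2 := (hadm.1 h).2
      rw [heps] at hb1 hb2
      have h1' : (-1 : ℝ) < (D.l1 h : ℝ) := by linarith
      have h2' : (D.l1 h : ℝ) < 1 := by linarith
      have h1'' : (-1 : ℤ) < D.l1 h := by exact_mod_cast h1'
      have h2'' : D.l1 h < 1 := by exact_mod_cast h2'
      omega
    rw [heq, Finset.Icc_self, Finset.sum_singleton]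
    refine Finset.sum_eq_zero fun j _ => ?_
    rw [heps, hl0]
    norm_num
  obtain ⟨h0, hh0⟩ := hex
  obtain ⟨i0, hi0⟩ := D.Δ_nonempty h0 (D.l1 h0) le_rfl (D.l1_le_l2 h0)
  obtain ⟨j0, hj0⟩ := D.Δ_nonempty h0 (D.l1 h0 + 1) (by omega) (by omega)
  have hSne : S.Nonempty := ⟨(i0, j0), ⟨h0, D.l1 h0, le_rfl, by omega, hi0, hj0⟩⟩
  have hsum1 : ∑ q ∈ D.edges, ‖β‖ ^ 2 * D.wt q = 1 := by
    rw [← Finset.mul_sum, D.sum_wt he horth, hnorm, inv_pow, mul_inv_cancel₀ hβ2]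
  have hmemS : ∀ q ∈ D.edges, e q.2.2.1 - e q.2.2.2 ∈
      (fun p : Fin M × Fin M => e p.1 - e p.2) '' S := by
    intro q hq
    rw [D.mem_edges] at hq
    exact Set.mem_image_of_mem _ ⟨q.1, q.2.1, hq.1, hq.2.1, hq.2.2.1, hq.2.2.2⟩
  have hmem : β ∈ convexHull ℝ ((fun p : Fin M × Fin M => e p.1 - e p.2) '' S) := by
    have hcm := Finset.centerMass_mem_convexHull D.edges
      (w := fun q => ‖β‖ ^ 2 * D.wt q)
      (fun q hq => mul_nonneg (sq_nonneg _) (D.wt_nonneg he hq))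
      (by rw [hsum1]; norm_num)
      (z := fun q => e q.2.2.1 - e q.2.2.2) hmemS
    have heq2 : D.edges.centerMass (fun q => ‖β‖ ^ 2 * D.wt q)
        (fun q => e q.2.2.1 - e q.2.2.2) = β := by
      rw [Finset.centerMass_eq_of_sum_1 _ _ hsum1]
      have : ∀ q ∈ D.edges, (‖β‖ ^ 2 * D.wt q) • (e q.2.2.1 - e q.2.2.2) =
          ‖β‖ ^ 2 • (D.wt q • (e q.2.2.1 - e q.2.2.2)) := fun q _ => by
        rw [smul_smul]
      rw [Finset.sum_congr rfl this, ← Finset.smul_sum, D.sum_wt_smul he, ← hb,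
        smul_inv_smul₀ hβ2]
    rwa [heq2] at hcm
  refine ⟨S, hSne, hmem, ?_⟩
  intro x hx
  have hplane : ⟪D.betaHat, x⟫ = 1 := by
    have hcvx : Convex ℝ {y : V | ⟪D.betaHat, y⟫ = (1 : ℝ)} :=
      convex_hyperplane ⟨fun a b => inner_add_right _ _ _,
        fun c a => real_inner_smul_right _ _ _⟩ 1
    exact convexHull_min (fun z hz => by
      obtain ⟨p, hp, rfl⟩ := hz; exact inner1 p hp) hcvx hx
  have h1 : (1 : ℝ) ≤ ‖D.betaHat‖ * ‖x‖ := hplane ▸ real_inner_le_norm _ _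
  rw [hnorm] at h1
  have h2 : ‖β‖ * 1 ≤ ‖β‖ * (‖β‖⁻¹ * ‖x‖) :=
    mul_le_mul_of_nonneg_left h1 (norm_nonneg β)
  rwa [mul_one, ← mul_assoc, mul_inv_cancel₀ hβn, one_mul] at h2

end Mpr
section MpAux
variable {V : Type*} [NormedAddCommGroup V] [InnerProductSpace ℝ V]

lemma frac_bounds (t : ℝ) : -(1/2 : ℝ) ≤ t - round t ∧ t - round t < 1/2 := by
  rw [round_eq]
  constructor
  · have := Int.floor_le (t + 1/2); linarith
  · have := Int.lt_floor_add_one (t + 1/2); linarith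

lemma min_inner {C : Set V} (hC : Convex ℝ C) {β : V} (hβC : β ∈ C)
    (hmin : ∀ x ∈ C, ‖β‖ ≤ ‖x‖) : ∀ x ∈ C, ‖β‖ ^ 2 ≤ ⟪β, x⟫ := by
  haveI : Nonempty C := ⟨⟨β, hβC⟩⟩
  have hinf : ‖(0 : V) - β‖ = ⨅ w : C, ‖(0 : V) - w‖ := by
    apply le_antisymm
    · refine le_ciInf fun w => ?_
      rw [zero_sub, zero_sub, norm_neg, norm_neg]
      exact hmin w w.2
    · have hbdd : BddBelow (Set.range fun w : C => ‖(0 : V) - (w : V)‖) := by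
        refine ⟨0, ?_⟩
        rintro y ⟨w, rfl⟩
        exact norm_nonneg _
      exact ciInf_le hbdd ⟨β, hβC⟩
  have hkey := (norm_eq_iInf_iff_real_inner_le_zero hC hβC).1 hinf
  intro x hx
  have h1 := hkey x hx
  rw [zero_sub, inner_neg_left, inner_sub_right, neg_nonpos] at h1
  rw [← real_inner_self_eq_norm_sq]
  linarith

end MpAux
section Mp
variable {V : Type*} [NormedAddCommGroup V] [InnerProductSpace ℝ V]
variable {M : ℕ} {e : Fin M → V}

theorem mp_direction (hM : 0 < M) (he : ∀ i, e i ≠ 0)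
    (horth : ∀ i j : Fin M, i ≠ j → ⟪e i, e j⟫ = 0)
    (β : V) (hβ : β ≠ 0) (S : Set (Fin M × Fin M))
    (hmem : β ∈ convexHull ℝ ((fun p : Fin M × Fin M => e p.1 - e p.2) '' S))
    (hmin : ∀ x ∈ convexHull ℝ ((fun p : Fin M × Fin M => e p.1 - e p.2) '' S), ‖β‖ ≤ ‖x‖) :
    ∃ D : ChainPartitionDatum M V e, D.Admissible ∧ (‖β‖ ^ 2)⁻¹ • β = D.betaHat := by
  classical
  have hβn : ‖β‖ ≠ 0 := norm_ne_zero_iff.2 hβ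
  have hβ2 : (‖β‖ : ℝ) ^ 2 ≠ 0 := pow_ne_zero _ hβn
  have hvar : ∀ x ∈ convexHull ℝ ((fun p : Fin M × Fin M => e p.1 - e p.2) '' S),
      ‖β‖ ^ 2 ≤ ⟪β, x⟫ := min_inner (convex_convexHull ℝ _) hmem hmin
  rw [convexHull_eq] at hmem
  obtain ⟨ι, t, w, z, hw0, hw1, hzS, hcm⟩ := hmem
  have hβrep : β = ∑ i ∈ t, w i • z i := by
    rw [← hcm, Finset.centerMass_eq_of_sum_1 _ _ hw1]
  have hge : ∀ i ∈ t, ‖β‖ ^ 2 ≤ ⟪β, z i⟫ := fun i hi =>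
    hvar _ (subset_convexHull ℝ _ (hzS i hi))
  have hsth : ∑ i ∈ t, w i * (⟪β, z i⟫ - ‖β‖ ^ 2) = 0 := by
    have h1 : ∑ i ∈ t, w i * ⟪β, z i⟫ = ‖β‖ ^ 2 := by
      have h2 : ⟪β, ∑ i ∈ t, w i • z i⟫ = ∑ i ∈ t, w i * ⟪β, z i⟫ := by
        rw [inner_sum]; exact Finset.sum_congr rfl fun i _ => real_inner_smul_right _ _ _
      rw [← h2, ← hβrep, real_inner_self_eq_norm_sq]
    simp only [mul_sub, Finset.sum_sub_distrib, h1, ← Finset.sum_mul, hw1, one_mul, sub_self]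
  have heqsupp : ∀ i ∈ t, w i ≠ 0 → ⟪β, z i⟫ = ‖β‖ ^ 2 := by
    intro i hi hwi
    have hterm := (Finset.sum_eq_zero_iff_of_nonneg
      (fun j hj => mul_nonneg (hw0 j hj) (sub_nonneg.2 (hge j hj)))).1 hsth i hi
    rcases mul_eq_zero.1 hterm with h | h
    · exact absurd h hwi
    · linarith [sub_eq_zero.1 h]
  set t₀ := t.filter (fun i => w i ≠ 0) with ht₀
  have hβrep0 : β = ∑ i ∈ t₀, w i • z i := by
    rw [hβrep]
    refine (Finset.sum_filter_of_ne ?_).symm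
    intro i hi hfne hw
    exact hfne (by rw [hw, zero_smul])
  have hzS' : ∀ i, i ∈ t₀ → ∃ q : Fin M × Fin M, e q.1 - e q.2 = z i := by
    intro i hi
    obtain ⟨q, _, hq2⟩ := hzS i (Finset.filter_subset _ _ hi)
    exact ⟨q, hq2⟩
  haveI : Nonempty (Fin M) := ⟨⟨0, hM⟩⟩
  choose! p hpz using hzS'
  have hβrep1 : β = ∑ i ∈ t₀, w i • (e (p i).1 - e (p i).2) := by
    rw [hβrep0]
    exact Finset.sum_congr rfl fun i hi => by rw [hpz i hi]
  set x : Fin M → ℝ := fun k => ⟪β, e k⟫ / ‖β‖ ^ 2 with hx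
  have hbxk : ∀ k, ⟪β, e k⟫ = x k * ‖β‖ ^ 2 := fun k => by
    simp only [hx]; field_simp
  have hedge : ∀ i ∈ t₀, x (p i).1 = x (p i).2 + 1 := by
    intro i hi
    have hit := Finset.mem_filter.1 hi
    have h1 := heqsupp i hit.1 hit.2
    rw [← hpz i hi, inner_sub_right, hbxk, hbxk] at h1
    have h2 : (x (p i).1 - x (p i).2) * ‖β‖ ^ 2 = 1 * ‖β‖ ^ 2 := by
      rw [sub_mul, one_mul]; linarith
    have := mul_right_cancel₀ hβ2 h2
    linarith
  -- fractional parts and levels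
  set φv : Fin M → ℝ := fun k => x k - round (x k) with hφv
  set lev : Fin M → ℤ := fun k => - round (x k) with hlev
  have hxkey : ∀ k, x k = φv k - (lev k : ℝ) := fun k => by
    simp only [hφv, hlev]; push_cast; ring
  have hfb : ∀ k, -(1/2 : ℝ) ≤ φv k ∧ φv k < 1/2 := fun k => frac_bounds (x k)
  have hedgeφ : ∀ i ∈ t₀, φv (p i).1 = φv (p i).2 ∧ lev (p i).1 = lev (p i).2 - 1 := by
    intro i hi
    have h1 := hedge i hi
    have hr : round (x (p i).1) = round (x (p i).2) + 1 := by
      rw [h1, show (1 : ℝ) = ((1 : ℤ) : ℝ) by norm_num, round_add_intCast]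
    constructor
    · simp only [hφv]; rw [hr, h1]; push_cast; ring
    · simp only [hlev]; omega
  -- the values
  set E : Finset ℝ := Finset.image φv Finset.univ with hEdef
  have hEne : E.Nonempty := ⟨φv ⟨0, hM⟩, Finset.mem_image_of_mem _ (Finset.mem_univ _)⟩
  have hL : 0 < E.card := Finset.card_pos.2 hEne
  set L := E.card with hLdef
  set rev : Fin L → Fin L := fun h => ⟨L - 1 - h.val, by omega⟩ with hrev
  set φ : Fin L → ℝ := fun h => (E.orderIsoOfFin rfl (rev h) : ℝ) with hφ
  have φanti : StrictAnti φ := by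
    intro h h' hlt
    have h1 : rev h' < rev h := by
      simp only [hrev, Fin.mk_lt_mk]
      have := h'.isLt
      omega
    exact_mod_cast (E.orderIsoOfFin rfl).strictMono h1
  have φinj : Function.Injective φ := φanti.injective
  have φmem : ∀ h, φ h ∈ E := fun h => (E.orderIsoOfFin rfl (rev h)).2
  have φsurj : ∀ v ∈ E, ∃ h, φ h = v := by
    intro v hv
    refine ⟨rev ((E.orderIsoOfFin rfl).symm ⟨v, hv⟩), ?_⟩
    simp only [hφ]
    have hrr : rev (rev ((E.orderIsoOfFin rfl).symm ⟨v, hv⟩)) =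
        (E.orderIsoOfFin rfl).symm ⟨v, hv⟩ := by
      apply Fin.ext
      simp only [hrev]
      have := ((E.orderIsoOfFin rfl).symm ⟨v, hv⟩).isLt
      omega
    rw [hrr, OrderIso.apply_symm_apply]
  -- classes
  set K : Fin L → Finset (Fin M) := fun h => Finset.univ.filter (fun k => φv k = φ h) with hK
  have hKne : ∀ h, (K h).Nonempty := by
    intro h
    obtain ⟨k, _, hk⟩ := Finset.mem_image.1 (φmem h)
    exact ⟨k, Finset.mem_filter.2 ⟨Finset.mem_univ _, hk⟩⟩
  set Mh : Fin L → Finset ℤ := fun h => (K h).image lev with hMh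
  have hMhne : ∀ h, (Mh h).Nonempty := fun h => (hKne h).image _
  set l1 : Fin L → ℤ := fun h => (Mh h).min' (hMhne h) with hl1
  set l2 : Fin L → ℤ := fun h => (Mh h).max' (hMhne h) with hl2
  have hl12 : ∀ h, l1 h ≤ l2 h := fun h =>
    Finset.min'_le _ _ ((Mh h).max'_mem (hMhne h))
  set Δ : Fin L → ℤ → Finset (Fin M) :=
    fun h m => Finset.univ.filter (fun k => φv k = φ h ∧ lev k = m) with hΔ
  have hattain : ∀ h m, m ∈ Mh h → ∃ k, φv k = φ h ∧ lev k = m := by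
    intro h m hm
    obtain ⟨k, hk, hkm⟩ := Finset.mem_image.1 hm
    exact ⟨k, (Finset.mem_filter.1 hk).2, hkm⟩
  -- the closed-set computation
  have hind : ∀ (G : Finset (Fin M)) (k : Fin M),
      ⟪e k, ∑ j ∈ G, (‖e j‖ ^ 2)⁻¹ • e j⟫ = if k ∈ G then 1 else 0 := by
    intro G k
    rw [real_inner_comm, inner_sum_smul_e horth]
    split_ifs with hkg
    · exact inv_mul_cancel₀ (pow_ne_zero 2 (norm_ne_zero_iff.2 (he k)))
    · rfl
  have hclosedsum : ∀ G : Finset (Fin M),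
      (∀ i ∈ t₀, ((p i).1 ∈ G ↔ (p i).2 ∈ G)) →
      ∑ k ∈ G, x k * (‖e k‖ ^ 2)⁻¹ = 0 := by
    intro G hG
    have h1 : ⟪β, ∑ j ∈ G, (‖e j‖ ^ 2)⁻¹ • e j⟫ = 0 := by
      rw [hβrep1, sum_inner]
      refine Finset.sum_eq_zero fun i hi => ?_
      rw [real_inner_smul_left, inner_sub_left, hind, hind]
      rcases Classical.em ((p i).1 ∈ G) with h | h
      · rw [if_pos h, if_pos ((hG i hi).1 h), sub_self, mul_zero]
      · rw [if_neg h, if_neg (fun hc => h ((hG i hi).2 hc)), sub_self, mul_zero]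
    have h2 : ⟪β, ∑ j ∈ G, (‖e j‖ ^ 2)⁻¹ • e j⟫ = ∑ k ∈ G, (‖e k‖ ^ 2)⁻¹ * ⟪β, e k⟫ := by
      rw [inner_sum]; exact Finset.sum_congr rfl fun k _ => real_inner_smul_right _ _ _
    rw [h2] at h1
    have h3 : ∑ k ∈ G, (‖e k‖ ^ 2)⁻¹ * ⟪β, e k⟫ =
        (∑ k ∈ G, x k * (‖e k‖ ^ 2)⁻¹) * ‖β‖ ^ 2 := by
      rw [Finset.sum_mul]
      exact Finset.sum_congr rfl fun k _ => by rw [hbxk k]; ring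
    rw [h3] at h1
    exact (mul_eq_zero.1 h1).resolve_right hβ2
  -- no gaps
  have hΔne : ∀ h m, l1 h ≤ m → m ≤ l2 h → (Δ h m).Nonempty := by
    intro h m hm1 hm2
    by_contra hemp
    rw [Finset.not_nonempty_iff_eq_empty] at hemp
    have hnolev : ∀ k, φv k = φ h → lev k ≠ m := by
      intro k hk hkm
      have hkin : k ∈ Δ h m := Finset.mem_filter.2 ⟨Finset.mem_univ _, hk, hkm⟩
      rw [hemp] at hkin
      exact absurd hkin (Finset.notMem_empty k)
    have hm1' : l1 h ≠ m := by
      intro hq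
      obtain ⟨k, hk1, hk2⟩ := hattain h (l1 h) ((Mh h).min'_mem (hMhne h))
      exact hnolev k hk1 (by omega)
    have hm2' : m ≠ l2 h := by
      intro hq
      obtain ⟨k, hk1, hk2⟩ := hattain h (l2 h) ((Mh h).max'_mem (hMhne h))
      exact hnolev k hk1 (by omega)
    set G := Finset.univ.filter (fun k => φv k = φ h ∧ m < lev k) with hG
    set G' := Finset.univ.filter (fun k => φv k = φ h ∧ lev k < m) with hG'
    have hGc : ∀ i ∈ t₀, ((p i).1 ∈ G ↔ (p i).2 ∈ G) := by
      intro i hi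
      obtain ⟨hφe, hle⟩ := hedgeφ i hi
      simp only [hG, Finset.mem_filter, Finset.mem_univ, true_and]
      constructor
      · rintro ⟨ha, hb⟩
        exact ⟨hφe.symm.trans ha, by omega⟩
      · rintro ⟨ha, hb⟩
        have hφ1 : φv (p i).1 = φ h := hφe.trans ha
        have hne := hnolev _ hφ1
        exact ⟨hφ1, by omega⟩
    have hG'c : ∀ i ∈ t₀, ((p i).1 ∈ G' ↔ (p i).2 ∈ G') := by
      intro i hi
      obtain ⟨hφe, hle⟩ := hedgeφ i hi
      simp only [hG', Finset.mem_filter, Finset.mem_univ, true_and]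
      constructor
      · rintro ⟨ha, hb⟩
        have hφ2 : φv (p i).2 = φ h := hφe.symm.trans ha
        have hne := hnolev _ hφ2
        exact ⟨hφ2, by omega⟩
      · rintro ⟨ha, hb⟩
        exact ⟨hφe.trans ha, by omega⟩
    have hGz := hclosedsum G hGc
    have hG'z := hclosedsum G' hG'c
    rcases le_or_gt (φ h) (m : ℝ) with hc | hc
    · -- upper part G is nonempty with strictly negative terms
      obtain ⟨k2, hk2a, hk2b⟩ := hattain h (l2 h) ((Mh h).max'_mem (hMhne h))
      have hk2G : k2 ∈ G := Finset.mem_filter.2 ⟨Finset.mem_univ _, hk2a, by omega⟩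
      have hlt : ∑ k ∈ G, x k * (‖e k‖ ^ 2)⁻¹ < ∑ k ∈ G, (0 : ℝ) := by
        refine Finset.sum_lt_sum_of_nonempty ⟨k2, hk2G⟩ fun k hk => ?_
        obtain ⟨-, hkφ, hkm⟩ := Finset.mem_filter.1 hk
        have hxneg : x k < 0 := by
          rw [hxkey k, hkφ]
          have hcast : (m : ℝ) + 1 ≤ (lev k : ℝ) := by exact_mod_cast hkm
          linarith
        have hinv : 0 < (‖e k‖ ^ 2)⁻¹ := by
          have : 0 < ‖e k‖ := norm_pos_iff.2 (he k)
          positivity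
        exact mul_neg_of_neg_of_pos hxneg hinv
      rw [Finset.sum_const_zero, hGz] at hlt
      exact absurd hlt (lt_irrefl 0)
    · -- lower part G' is nonempty with strictly positive terms
      obtain ⟨k1, hk1a, hk1b⟩ := hattain h (l1 h) ((Mh h).min'_mem (hMhne h))
      have hk1G : k1 ∈ G' := Finset.mem_filter.2 ⟨Finset.mem_univ _, hk1a, by omega⟩
      have hlt : ∑ k ∈ G', (0 : ℝ) < ∑ k ∈ G', x k * (‖e k‖ ^ 2)⁻¹ := by
        refine Finset.sum_lt_sum_of_nonempty ⟨k1, hk1G⟩ fun k hk => ?_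
        obtain ⟨-, hkφ, hkm⟩ := Finset.mem_filter.1 hk
        have hxpos : 0 < x k := by
          rw [hxkey k, hkφ]
          have hcast : (lev k : ℝ) ≤ (m : ℝ) - 1 := by exact_mod_cast by omega
          linarith
        have hinv : 0 < (‖e k‖ ^ 2)⁻¹ := by
          have : 0 < ‖e k‖ := norm_pos_iff.2 (he k)
          positivity
        exact mul_pos hxpos hinv
      rw [Finset.sum_const_zero, hG'z] at hlt
      exact absurd hlt (lt_irrefl 0)
  -- disjointness and union
  have hΔdisj : ∀ h m h' m', l1 h ≤ m → m ≤ l2 h → l1 h' ≤ m' → m' ≤ l2 h' →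
      (h, m) ≠ (h', m') → Disjoint (Δ h m) (Δ h' m') := by
    intro h m h' m' _ _ _ _ hne
    rw [Finset.disjoint_left]
    intro k hk hk'
    obtain ⟨-, hk1, hk2⟩ := Finset.mem_filter.1 hk
    obtain ⟨-, hk1', hk2'⟩ := Finset.mem_filter.1 hk'
    apply hne
    have hhh : h = h' := φinj (hk1.symm.trans hk1')
    have hmm : m = m' := hk2.symm.trans hk2'
    rw [hhh, hmm]
  have hΔu : ∀ k : Fin M, ∃ h m, l1 h ≤ m ∧ m ≤ l2 h ∧ k ∈ Δ h m := by
    intro k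
    obtain ⟨h, hh⟩ := φsurj (φv k) (Finset.mem_image_of_mem φv (Finset.mem_univ k))
    have hkK : k ∈ K h := Finset.mem_filter.2 ⟨Finset.mem_univ _, hh.symm⟩
    have hlevm : lev k ∈ Mh h := Finset.mem_image_of_mem lev hkK
    exact ⟨h, lev k, Finset.min'_le _ _ hlevm, Finset.le_max' _ _ hlevm,
      Finset.mem_filter.2 ⟨Finset.mem_univ _, hh.symm, rfl⟩⟩
  -- the datum
  set D : ChainPartitionDatum M V e :=
    ⟨L, hL, l1, l2, hl12, Δ, hΔne, hΔdisj, hΔu⟩ with hD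
  -- eps = φ
  have hDr : ∀ h m, D.r h m = ∑ k ∈ Δ h m, (‖e k‖ ^ 2)⁻¹ := fun h m => rfl
  have hKsplit : ∀ h, ∑ m ∈ Finset.Icc (l1 h) (l2 h), (φ h - (m : ℝ)) * D.r h m
      = ∑ k ∈ K h, x k * (‖e k‖ ^ 2)⁻¹ := by
    intro h
    have hbi : (Finset.Icc (l1 h) (l2 h)).biUnion (fun m => Δ h m) = K h := by
      ext k
      simp only [Finset.mem_biUnion, Finset.mem_Icc, hΔ, hK, Finset.mem_filter,
        Finset.mem_univ, true_and]
      constructor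
      · rintro ⟨m, -, hm2, -⟩
        exact hm2
      · intro hk
        have hkK : k ∈ K h := Finset.mem_filter.2 ⟨Finset.mem_univ _, hk⟩
        have hlevm : lev k ∈ Mh h := Finset.mem_image_of_mem lev hkK
        exact ⟨lev k, ⟨Finset.min'_le _ _ hlevm, Finset.le_max' _ _ hlevm⟩, hk, rfl⟩
    have hdisj2 : (↑(Finset.Icc (l1 h) (l2 h)) : Set ℤ).PairwiseDisjoint (fun m => Δ h m) := by
      intro m _ m' _ hmm'
      rw [Function.onFun, Finset.disjoint_left]
      intro k hk hk'
      obtain ⟨-, -, hk2⟩ := Finset.mem_filter.1 hk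
      obtain ⟨-, -, hk2'⟩ := Finset.mem_filter.1 hk'
      exact hmm' (hk2.symm.trans hk2')
    rw [← hbi, Finset.sum_biUnion hdisj2]
    refine Finset.sum_congr rfl fun m hm => ?_
    rw [hDr, Finset.mul_sum]
    refine Finset.sum_congr rfl fun k hk => ?_
    obtain ⟨-, hk1, hk2⟩ := Finset.mem_filter.1 hk
    rw [hxkey k, hk1, hk2]
  have hKzero : ∀ h, ∑ k ∈ K h, x k * (‖e k‖ ^ 2)⁻¹ = 0 := by
    intro h
    refine hclosedsum (K h) fun i hi => ?_
    obtain ⟨hφe, -⟩ := hedgeφ i hi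
    simp only [hK, Finset.mem_filter, Finset.mem_univ, true_and]
    rw [hφe]
  have heps : ∀ h, D.eps h = φ h := by
    intro h
    have h0 : ∑ m ∈ Finset.Icc (l1 h) (l2 h), (φ h - (m : ℝ)) * D.r h m = 0 :=
      (hKsplit h).trans (hKzero h)
    have hp : 0 < ∑ m ∈ Finset.Icc (l1 h) (l2 h), D.r h m := D.sum_r_pos he h
    rw [ChainPartitionDatum.eps]
    rw [div_eq_iff hp.ne']
    simp only [sub_mul, Finset.sum_sub_distrib, ← Finset.mul_sum] at h0
    linarith
  -- admissibility
  have hbounds : ∀ h, -(1/2 : ℝ) ≤ D.eps h ∧ D.eps h < 1/2 := by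
    intro h
    rw [heps h]
    obtain ⟨k, -, hk⟩ := Finset.mem_image.1 (φmem h)
    rw [← hk]
    exact hfb k
  have hanti : StrictAnti D.eps := by
    intro a b hab
    rw [heps a, heps b]
    exact φanti hab
  -- the final identity
  have hbspan : (‖β‖ ^ 2)⁻¹ • β ∈ Submodule.span ℝ (Set.range e) := by
    apply Submodule.smul_mem
    rw [hβrep1]
    exact Submodule.sum_mem _ fun i _ => Submodule.smul_mem _ _
      (Submodule.sub_mem _ (Submodule.subset_span ⟨_, rfl⟩)
        (Submodule.subset_span ⟨_, rfl⟩))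
  refine ⟨D, ⟨hbounds, hanti⟩, span_ext hbspan D.betaHat_mem_span ?_⟩
  intro k
  rw [real_inner_smul_left, D.inner_betaHat he horth]
  have h1 : (‖β‖ ^ 2)⁻¹ * ⟪β, e k⟫ = x k := by
    rw [hbxk k]; field_simp
  rw [h1]
  obtain ⟨s1, s2, s3⟩ := D.sel_spec k
  have hmem3 := Finset.mem_filter.1 s3
  rw [ChainPartitionDatum.x, heps, ← hmem3.2.1, ← hmem3.2.2]
  exact hxkey k

end Mp

/-- A nonzero `β` is a point of minimal norm of the convex hull of
`{e_i − e_j : (i,j) ∈ S}` for some nonempty set `S` of ordered pairs if and only if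
there is an admissible chain-partition datum with `β/‖β‖² = β̂`. -/
theorem minNormPoint_iff_exists_admissible_chainPartitionDatum
    {V : Type*} [NormedAddCommGroup V] [InnerProductSpace ℝ V]
    {M : ℕ} (hM : 0 < M) (e : Fin M → V) (he : ∀ i, e i ≠ 0)
    (horth : ∀ i j : Fin M, i ≠ j → ⟪e i, e j⟫ = 0)
    (β : V) (hβ : β ≠ 0) :
    (∃ S : Set (Fin M × Fin M), S.Nonempty ∧
        β ∈ convexHull ℝ ((fun p : Fin M × Fin M => e p.1 - e p.2) '' S) ∧
        ∀ x ∈ convexHull ℝ ((fun p : Fin M × Fin M => e p.1 - e p.2) '' S), ‖β‖ ≤ ‖x‖) ↔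
      ∃ D : ChainPartitionDatum M V e, D.Admissible ∧ (‖β‖ ^ 2)⁻¹ • β = D.betaHat := by
  constructor
  · rintro ⟨S, _, hmem, hmin⟩
    exact mp_direction hM he horth β hβ S hmem hmin
  · rintro ⟨D, hadm, hb⟩
    exact mpr_direction he horth D hadm β hβ hb
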